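/- (Polynomial degree bounds in z.) Suppose Z, W^1, …, W^8 ∈ ℂ⟦z, w^1, …, w^8⟧ are formal power series such that X = Z∂_z + Σ_{l=1}^8 W^l ∂_{w^l} is a formal infinitesimal CR-automorphism of M^1. Then, expanding each series with respect to powers of z, the coefficient of z^t in Z vanishes for all t ≥ 6; the coefficient of z^t in W^1 vanishes for all t ≥ 2; in W^2 and W^3 for all t ≥ 3; in W^4 and W^5 for all t ≥ 4; in W^6 for all t ≥ 1; and in W^7 and W^8 for all t ≥ 5. In particular Z and all W^l are polynomial in z. -/

import Mathlib

/- Polynomial degree bounds in `z` for formal infinitesimal CR-automorphisms of `M¹`. -/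

open MvPolynomial Complex

noncomputable section

/-- Variables of `ℂ⟦z, w¹, …, w⁸⟧`: `Sum.inl ()` is `z`, `Sum.inr l` is `w^{l+1}`. -/
abbrev CRVs : Type := Unit ⊕ Fin 8

/-- Variables of `ℂ⟦z, ζ, ω¹, …, ω⁸⟧`: `Sum.inl 0` is `z`, `Sum.inl 1` is `ζ`,
`Sum.inr l` is `ω^{l+1}`. -/
abbrev CRVb : Type := Fin 2 ⊕ Fin 8

/-- The ring `ℂ[z, ζ, ω¹, …, ω⁸]`. -/
abbrev CRB : Type := MvPolynomial CRVb ℂ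

def zB : CRB := X (Sum.inl 0)
def zbB : CRB := X (Sum.inl 1)

/-- The defining polynomials of the model `M¹` (with `z̄` replaced by `ζ`). -/
def XiM1 : Fin 8 → CRB :=
  ![ C (2*I) * zB * zbB,
     C (2*I) * (zB^2 * zbB + zB * zbB^2),
     2 * (zB^2 * zbB - zB * zbB^2),
     C (2*I) * (zB^3 * zbB + zB * zbB^3),
     2 * (zB^3 * zbB - zB * zbB^3),
     C (2*I) * zB^2 * zbB^2,
     C (2*I) * (zB^4 * zbB + zB * zbB^4),
     2 * (zB^4 * zbB - zB * zbB^4) ]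

/-- Substitution of the polynomials `a v` (each with zero constant term) for the
variables of a formal power series `f ∈ ℂ⟦z, w¹, …, w⁸⟧`, producing an element of
`ℂ⟦z, ζ, ω¹, …, ω⁸⟧`.  Because each `a v` used below has zero constant coefficient,
only the finitely many monomials of `f` of total degree at most the total degree of the
target exponent contribute to each coefficient, so the following finite sum computes the
genuine substitution `f(a)`. -/
def substPS (a : CRVs → CRB) (f : MvPowerSeries CRVs ℂ) : MvPowerSeries CRVb ℂ :=
  fun e =>
    ∑ d ∈ Finset.Iic
        ((Finsupp.equivFunOnFinite.symm fun _ : CRVs => e.sum fun _ n => n) : CRVs →₀ ℕ),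
      MvPowerSeries.coeff d f * MvPolynomial.coeff e (∏ v : CRVs, a v ^ d v)

/-- The substitution `z ↦ z`, `w^l ↦ ω^l + Ξ_l(z, ζ)`. -/
def substA : CRVs → CRB :=
  fun v => match v with
    | Sum.inl _ => zB
    | Sum.inr l => X (Sum.inr l) + XiM1 l

/-- The substitution `z ↦ ζ`, `w^l ↦ ω^l`. -/
def substB : CRVs → CRB :=
  fun v => match v with
    | Sum.inl _ => zbB
    | Sum.inr l => X (Sum.inr l)

/-- Conjugation of all coefficients of a formal power series. -/
def psconj : MvPowerSeries CRVs ℂ →+* MvPowerSeries CRVs ℂ :=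
  MvPowerSeries.map (starRingEnd ℂ)

/-- `X = Z∂_z + Σ_l W^l ∂_{w^l}` (with formal power series coefficients) is a formal
infinitesimal CR-automorphism of `M¹`: for each `j` the tangency identity
`W^j(z, ω + Ξ(z,ζ)) − conj(W^j)(ζ, ω) − Z(z, ω + Ξ(z,ζ))·∂_zΞ_j(z,ζ)
 − conj(Z)(ζ, ω)·∂_ζΞ_j(z,ζ) = 0` holds in `ℂ⟦z, ζ, ω¹, …, ω⁸⟧`. -/
def IsFormalCRAut (Z : MvPowerSeries CRVs ℂ) (W : Fin 8 → MvPowerSeries CRVs ℂ) : Prop :=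
  ∀ j : Fin 8,
    substPS substA (W j) - substPS substB (psconj (W j))
      - substPS substA Z * ((pderiv (Sum.inl 0) (XiM1 j) : CRB) : MvPowerSeries CRVb ℂ)
      - substPS substB (psconj Z) *
          ((pderiv (Sum.inl 1) (XiM1 j) : CRB) : MvPowerSeries CRVb ℂ) = 0

/-- Upper bounds on the degree in `z`: the coefficient of `z^t` in `W^{l+1}` vanishes as
soon as `t ≥ thr l`. -/
def thr : Fin 8 → ℕ := ![2, 3, 3, 4, 4, 1, 5, 5]

def embv : CRVs → CRVb := Sum.map (fun _ => 0) id

lemma embv_inj : Function.Injective embv := by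
  intro a b h
  cases a <;> cases b <;> simp [embv] at h ⊢ <;> simp_all

def emb (d : CRVs →₀ ℕ) : CRVb →₀ ℕ := d.mapDomain embv

@[simp] lemma emb_z (d : CRVs →₀ ℕ) : emb d (Sum.inl 0) = d (Sum.inl ()) :=
  Finsupp.mapDomain_apply embv_inj d (Sum.inl ())

@[simp] lemma emb_zeta (d : CRVs →₀ ℕ) : emb d (Sum.inl 1) = 0 := by
  refine Finsupp.mapDomain_notin_range d _ ?_
  rintro ⟨v, hv⟩
  cases v <;> simp [embv] at hv

@[simp] lemma emb_w (d : CRVs →₀ ℕ) (l : Fin 8) : emb d (Sum.inr l) = d (Sum.inr l) :=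
  Finsupp.mapDomain_apply embv_inj d (Sum.inr l)

lemma emb_inj : Function.Injective emb :=
  fun _ _ h => Finsupp.mapDomain_injective embv_inj h

-- the "kill ζ" algebra map

def killζ : CRB →ₐ[ℂ] CRB :=
  aeval (fun v => if v = Sum.inl 1 then 0 else X v)

lemma coeff_killζ' (P : CRB) : ∀ e : CRVb →₀ ℕ, e (Sum.inl 1) = 0 →
    MvPolynomial.coeff e (killζ P) = MvPolynomial.coeff e P := by
  induction P using MvPolynomial.induction_on with
  | C a => intro e he; simp [killζ]
  | add p q hp hq =>
    intro e he
    simp [map_add, coeff_add, hp e he, hq e he]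
  | mul_X p v hp =>
    intro e he
    rw [map_mul, killζ]
    by_cases hv : v = Sum.inl 1
    · subst hv
      simp only [aeval_X, if_pos rfl, if_true, mul_zero, coeff_zero]
      rw [MvPolynomial.coeff_mul_X']
      simp [Finsupp.mem_support_iff, he]
    · simp only [aeval_X, if_neg hv]
      rw [MvPolynomial.coeff_mul_X', MvPolynomial.coeff_mul_X']
      split_ifs with h
      · apply hp
        simp only [Finsupp.coe_tsub, Pi.sub_apply]
        rw [Finsupp.single_apply, if_neg hv]
        omega
      · rfl

lemma coeff_killζ (P : CRB) (e : CRVb →₀ ℕ) (he : e (Sum.inl 1) = 0) :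
    MvPolynomial.coeff e (killζ P) = MvPolynomial.coeff e P := coeff_killζ' P e he

lemma killζ_substA (v : CRVs) : killζ (substA v) = X (embv v) := by
  cases v with
  | inl u => simp [substA, killζ, zB, embv]
  | inr l =>
    have hzb : killζ zbB = 0 := by simp [killζ, zbB]
    have hXi : killζ (XiM1 l) = 0 := by
      have h0 : killζ (XiM1 0) = 0 := by
        rw [show XiM1 0 = C (2*I) * zB * zbB from rfl]; simp [hzb]
      have h1 : killζ (XiM1 1) = 0 := by
        rw [show XiM1 1 = C (2*I) * (zB^2 * zbB + zB * zbB^2) from rfl]; simp [hzb]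
      have h2 : killζ (XiM1 2) = 0 := by
        rw [show XiM1 2 = 2 * (zB^2 * zbB - zB * zbB^2) from rfl]; simp [hzb]
      have h3 : killζ (XiM1 3) = 0 := by
        rw [show XiM1 3 = C (2*I) * (zB^3 * zbB + zB * zbB^3) from rfl]; simp [hzb]
      have h4 : killζ (XiM1 4) = 0 := by
        rw [show XiM1 4 = 2 * (zB^3 * zbB - zB * zbB^3) from rfl]; simp [hzb]
      have h5 : killζ (XiM1 5) = 0 := by
        rw [show XiM1 5 = C (2*I) * zB^2 * zbB^2 from rfl]; simp [hzb]
      have h6 : killζ (XiM1 6) = 0 := by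
        rw [show XiM1 6 = C (2*I) * (zB^4 * zbB + zB * zbB^4) from rfl]; simp [hzb]
      have h7 : killζ (XiM1 7) = 0 := by
        rw [show XiM1 7 = 2 * (zB^4 * zbB - zB * zbB^4) from rfl]; simp [hzb]
      fin_cases l
      · exact h0
      · exact h1
      · exact h2
      · exact h3
      · exact h4
      · exact h5
      · exact h6
      · exact h7
    show killζ (X (Sum.inr l) + XiM1 l) = X (embv (Sum.inr l))
    rw [map_add, hXi, add_zero]
    simp [killζ, embv]

lemma prod_X_pow (f : CRVs → CRVb) (hf : Function.Injective f) (d : CRVs →₀ ℕ) :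
    (∏ v : CRVs, (X (f v) : CRB) ^ d v) = monomial (d.mapDomain f) 1 := by
  rw [monomial_eq, C_1, one_mul, Finsupp.prod_mapDomain_index_inj hf,
    Finsupp.prod_fintype]
  intro i; simp

lemma coeff_prodA_emb (d' d : CRVs →₀ ℕ) :
    MvPolynomial.coeff (emb d) (∏ v : CRVs, substA v ^ d' v)
      = if d' = d then 1 else 0 := by
  rw [← coeff_killζ _ _ (emb_zeta d), map_prod]
  simp_rw [map_pow, killζ_substA]
  rw [prod_X_pow embv embv_inj d', MvPolynomial.coeff_monomial]
  by_cases h : d' = d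
  · simp [h, emb]
  · have hme : Finsupp.mapDomain embv d' = emb d' := rfl
    rw [hme, if_neg (fun hh => h (emb_inj hh)), if_neg h]

lemma le_sumn (d : CRVs →₀ ℕ) (v : CRVs) : d v ≤ d.sum fun _ n => n := by
  classical
  by_cases h : v ∈ d.support
  · exact Finset.single_le_sum (fun _ _ => Nat.zero_le _) h
  · simp [Finsupp.notMem_support_iff.mp h]

lemma coeff_substA_emb (f : MvPowerSeries CRVs ℂ) (d : CRVs →₀ ℕ) :
    MvPowerSeries.coeff (emb d) (substPS substA f) = MvPowerSeries.coeff d f := by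
  rw [MvPowerSeries.coeff_apply, substPS]
  rw [Finset.sum_eq_single_of_mem d ?mem ?h0]
  · rw [coeff_prodA_emb, if_pos rfl, mul_one]
  case h0 =>
    intro d' _ hd'
    rw [coeff_prodA_emb, if_neg hd', mul_zero]
  case mem =>
    rw [Finset.mem_Iic, Finsupp.le_def]
    intro v
    have : ((Finsupp.equivFunOnFinite.symm fun _ : CRVs => (emb d).sum fun _ n => n) :
        CRVs →₀ ℕ) v = (emb d).sum fun _ n => n := rfl
    rw [this, emb, Finsupp.sum_mapDomain_index (fun _ => rfl) (fun _ _ _ => rfl)]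
    exact le_sumn d v

def embw : CRVs → CRVb := Sum.map (fun _ => 1) id

lemma embw_inj : Function.Injective embw := by
  intro a b h
  cases a <;> cases b <;> simp [embw] at h ⊢ <;> simp_all

lemma substB_eq (v : CRVs) : substB v = X (embw v) := by
  cases v <;> rfl

lemma coeff_substB_zero (g : MvPowerSeries CRVs ℂ) (a : CRVb →₀ ℕ)
    (ha : a (Sum.inl 0) ≠ 0) :
    MvPowerSeries.coeff a (substPS substB g) = 0 := by
  rw [MvPowerSeries.coeff_apply, substPS]
  apply Finset.sum_eq_zero
  intro d' _
  simp_rw [substB_eq]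
  rw [prod_X_pow embw embw_inj d', MvPolynomial.coeff_monomial, if_neg, mul_zero]
  intro h
  apply ha
  rw [← h]
  refine Finsupp.mapDomain_notin_range _ _ ?_
  rintro ⟨v, hv⟩
  cases v <;> simp [embw] at hv

lemma L_zb (F : MvPowerSeries CRVb ℂ) (Q : CRB) (e : CRVb →₀ ℕ)
    (he : e (Sum.inl 1) = 0) :
    MvPowerSeries.coeff e (F * ((zbB * Q : CRB) : MvPowerSeries CRVb ℂ)) = 0 := by
  rw [MvPowerSeries.coeff_mul]
  apply Finset.sum_eq_zero
  rintro ⟨a, b⟩ hab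
  rw [Finset.HasAntidiagonal.mem_antidiagonal] at hab
  have hb1 : b (Sum.inl 1) = 0 := by
    have := congrArg (fun x => x (Sum.inl 1)) hab
    simp only [Finsupp.coe_add, Pi.add_apply] at this
    omega
  rw [MvPolynomial.coeff_coe, zbB, MvPolynomial.coeff_X_mul', if_neg, mul_zero]
  simp [Finsupp.mem_support_iff, hb1]

lemma L_zk (F : MvPowerSeries CRVb ℂ)
    (hF : ∀ a : CRVb →₀ ℕ, a (Sum.inl 0) ≠ 0 → MvPowerSeries.coeff a F = 0)
    (c : ℂ) (k : ℕ) (e : CRVb →₀ ℕ) (he : k < e (Sum.inl 0)) :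
    MvPowerSeries.coeff e (F * ((C c * zB ^ k : CRB) : MvPowerSeries CRVb ℂ)) = 0 := by
  rw [MvPowerSeries.coeff_mul]
  apply Finset.sum_eq_zero
  rintro ⟨a, b⟩ hab
  rw [Finset.HasAntidiagonal.mem_antidiagonal] at hab
  rw [MvPolynomial.coeff_coe, zB, MvPolynomial.coeff_C_mul, MvPolynomial.coeff_X_pow]
  by_cases hb : Finsupp.single (Sum.inl 0 : CRVb) k = b
  · have ha0 : a (Sum.inl 0) ≠ 0 := by
      have := congrArg (fun x => x (Sum.inl 0)) hab
      simp only [Finsupp.coe_add, Pi.add_apply] at this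
      rw [← hb] at this
      simp [Finsupp.single_apply] at this
      omega
    rw [hF a ha0, zero_mul]
  · rw [if_neg hb, mul_zero, mul_zero]

lemma L_shift (F : MvPowerSeries CRVb ℂ) (c : ℂ) (e : CRVb →₀ ℕ) :
    MvPowerSeries.coeff (e + Finsupp.single (Sum.inl 1 : CRVb) 1)
        (F * ((C c * zbB : CRB) : MvPowerSeries CRVb ℂ))
      = c * MvPowerSeries.coeff e F := by
  rw [MvPowerSeries.coeff_mul]
  rw [Finset.sum_eq_single (e, Finsupp.single (Sum.inl 1 : CRVb) 1)]
  · rw [MvPolynomial.coeff_coe, zbB, MvPolynomial.coeff_C_mul, MvPolynomial.coeff_X, if_pos rfl]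
    ring
  · rintro ⟨a, b⟩ hab hne
    rw [Finset.HasAntidiagonal.mem_antidiagonal] at hab
    rw [MvPolynomial.coeff_coe, zbB, MvPolynomial.coeff_C_mul]
    by_cases hb : b = Finsupp.single (Sum.inl 1 : CRVb) 1
    · exfalso
      apply hne
      subst hb
      have : a = e := by
        apply add_right_cancel (b := Finsupp.single (Sum.inl 1 : CRVb) 1)
        exact hab
      rw [this]
    · rw [MvPolynomial.coeff_X', if_neg (fun hh => hb hh.symm), mul_zero, mul_zero]
  · intro h
    simp at h

-- derivative decompositions

def ccv : Fin 8 → ℂ := ![2*I, 2*I, 2, 2*I, 2, 0, 2*I, 2]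

def Azv : Fin 8 → CRB :=
  ![ C (2*I),
     C (2*I) * (2*zB + zbB),
     2 * (2*zB - zbB),
     C (2*I) * (3*zB^2 + zbB^2),
     2 * (3*zB^2 - zbB^2),
     C (2*I) * 2 * zB * zbB,
     C (2*I) * (4*zB^3 + zbB^3),
     2 * (4*zB^3 - zbB^3) ]

def Bzv : Fin 8 → CRB :=
  ![ 0,
     C (4*I) * zB,
     (-4) * zB,
     C (6*I) * zB * zbB,
     (-6) * zB * zbB,
     C (4*I) * zB^2,
     C (8*I) * zB * zbB^2,
     (-8) * zB * zbB^2 ]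

@[simp] lemma pderiv_two (s : CRVb) : pderiv s (2 : CRB) = 0 := by
  rw [show (2 : CRB) = C 2 from (map_ofNat C 2).symm]
  exact pderiv_C

lemma pdz (j : Fin 8) : pderiv (Sum.inl 0) (XiM1 j) = zbB * Azv j := by
  have h0 : pderiv (Sum.inl 0 : CRVb) (XiM1 0) = zbB * Azv 0 := by
    rw [show XiM1 0 = C (2*I) * zB * zbB from rfl, show Azv 0 = C (2*I) from rfl]
    simp [zB, zbB, pderiv_mul, pderiv_X_self, pderiv_X_of_ne, map_ofNat]
    try ring
  have h1 : pderiv (Sum.inl 0 : CRVb) (XiM1 1) = zbB * Azv 1 := by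
    rw [show XiM1 1 = C (2*I) * (zB^2 * zbB + zB * zbB^2) from rfl,
      show Azv 1 = C (2*I) * (2*zB + zbB) from rfl]
    simp [zB, zbB, pderiv_mul, pderiv_pow, pderiv_X_self, pderiv_X_of_ne, map_ofNat]
    try ring
  have h2 : pderiv (Sum.inl 0 : CRVb) (XiM1 2) = zbB * Azv 2 := by
    rw [show XiM1 2 = 2 * (zB^2 * zbB - zB * zbB^2) from rfl,
      show Azv 2 = 2 * (2*zB - zbB) from rfl]
    simp [zB, zbB, pderiv_mul, pderiv_pow, pderiv_X_self, pderiv_X_of_ne, map_ofNat]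
    try ring
  have h3 : pderiv (Sum.inl 0 : CRVb) (XiM1 3) = zbB * Azv 3 := by
    rw [show XiM1 3 = C (2*I) * (zB^3 * zbB + zB * zbB^3) from rfl,
      show Azv 3 = C (2*I) * (3*zB^2 + zbB^2) from rfl]
    simp [zB, zbB, pderiv_mul, pderiv_pow, pderiv_X_self, pderiv_X_of_ne, map_ofNat]
    try ring
  have h4 : pderiv (Sum.inl 0 : CRVb) (XiM1 4) = zbB * Azv 4 := by
    rw [show XiM1 4 = 2 * (zB^3 * zbB - zB * zbB^3) from rfl,
      show Azv 4 = 2 * (3*zB^2 - zbB^2) from rfl]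
    simp [zB, zbB, pderiv_mul, pderiv_pow, pderiv_X_self, pderiv_X_of_ne, map_ofNat]
    try ring
  have h5 : pderiv (Sum.inl 0 : CRVb) (XiM1 5) = zbB * Azv 5 := by
    rw [show XiM1 5 = C (2*I) * zB^2 * zbB^2 from rfl,
      show Azv 5 = C (2*I) * 2 * zB * zbB from rfl]
    simp [zB, zbB, pderiv_mul, pderiv_pow, pderiv_X_self, pderiv_X_of_ne, map_ofNat]
    try ring
  have h6 : pderiv (Sum.inl 0 : CRVb) (XiM1 6) = zbB * Azv 6 := by
    rw [show XiM1 6 = C (2*I) * (zB^4 * zbB + zB * zbB^4) from rfl,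
      show Azv 6 = C (2*I) * (4*zB^3 + zbB^3) from rfl]
    simp [zB, zbB, pderiv_mul, pderiv_pow, pderiv_X_self, pderiv_X_of_ne, map_ofNat]
    try ring
  have h7 : pderiv (Sum.inl 0 : CRVb) (XiM1 7) = zbB * Azv 7 := by
    rw [show XiM1 7 = 2 * (zB^4 * zbB - zB * zbB^4) from rfl,
      show Azv 7 = 2 * (4*zB^3 - zbB^3) from rfl]
    simp [zB, zbB, pderiv_mul, pderiv_pow, pderiv_X_self, pderiv_X_of_ne, map_ofNat]
    try ring
  fin_cases j
  · exact h0
  · exact h1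
  · exact h2
  · exact h3
  · exact h4
  · exact h5
  · exact h6
  · exact h7

lemma pdzb (j : Fin 8) :
    pderiv (Sum.inl 1) (XiM1 j) = C (ccv j) * zB ^ (thr j - 1) + zbB * Bzv j := by
  have h0 : pderiv (Sum.inl 1 : CRVb) (XiM1 0) = C (ccv 0) * zB ^ 1 + zbB * Bzv 0 := by
    rw [show XiM1 0 = C (2*I) * zB * zbB from rfl, show ccv 0 = 2*I from rfl,
      show Bzv 0 = 0 from rfl]
    simp [zB, zbB, pderiv_mul, pderiv_X_self, pderiv_X_of_ne, map_ofNat]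
    try ring
  have h1 : pderiv (Sum.inl 1 : CRVb) (XiM1 1) = C (ccv 1) * zB ^ 2 + zbB * Bzv 1 := by
    rw [show XiM1 1 = C (2*I) * (zB^2 * zbB + zB * zbB^2) from rfl,
      show ccv 1 = 2*I from rfl, show Bzv 1 = C (4*I) * zB from rfl]
    simp [zB, zbB, pderiv_mul, pderiv_pow, pderiv_X_self, pderiv_X_of_ne, map_ofNat]
    try ring
  have h2 : pderiv (Sum.inl 1 : CRVb) (XiM1 2) = C (ccv 2) * zB ^ 2 + zbB * Bzv 2 := by
    rw [show XiM1 2 = 2 * (zB^2 * zbB - zB * zbB^2) from rfl,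
      show ccv 2 = 2 from rfl, show Bzv 2 = (-4) * zB from rfl]
    simp [zB, zbB, pderiv_mul, pderiv_pow, pderiv_X_self, pderiv_X_of_ne, map_ofNat]
    try ring
  have h3 : pderiv (Sum.inl 1 : CRVb) (XiM1 3) = C (ccv 3) * zB ^ 3 + zbB * Bzv 3 := by
    rw [show XiM1 3 = C (2*I) * (zB^3 * zbB + zB * zbB^3) from rfl,
      show ccv 3 = 2*I from rfl, show Bzv 3 = C (6*I) * zB * zbB from rfl]
    simp [zB, zbB, pderiv_mul, pderiv_pow, pderiv_X_self, pderiv_X_of_ne, map_ofNat]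
    try ring
  have h4 : pderiv (Sum.inl 1 : CRVb) (XiM1 4) = C (ccv 4) * zB ^ 3 + zbB * Bzv 4 := by
    rw [show XiM1 4 = 2 * (zB^3 * zbB - zB * zbB^3) from rfl,
      show ccv 4 = 2 from rfl, show Bzv 4 = (-6) * zB * zbB from rfl]
    simp [zB, zbB, pderiv_mul, pderiv_pow, pderiv_X_self, pderiv_X_of_ne, map_ofNat]
    try ring
  have h5 : pderiv (Sum.inl 1 : CRVb) (XiM1 5) = C (ccv 5) * zB ^ 0 + zbB * Bzv 5 := by
    rw [show XiM1 5 = C (2*I) * zB^2 * zbB^2 from rfl,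
      show ccv 5 = 0 from rfl, show Bzv 5 = C (4*I) * zB^2 from rfl]
    simp [zB, zbB, pderiv_mul, pderiv_pow, pderiv_X_self, pderiv_X_of_ne, map_ofNat]
    try ring
  have h6 : pderiv (Sum.inl 1 : CRVb) (XiM1 6) = C (ccv 6) * zB ^ 4 + zbB * Bzv 6 := by
    rw [show XiM1 6 = C (2*I) * (zB^4 * zbB + zB * zbB^4) from rfl,
      show ccv 6 = 2*I from rfl, show Bzv 6 = C (8*I) * zB * zbB^2 from rfl]
    simp [zB, zbB, pderiv_mul, pderiv_pow, pderiv_X_self, pderiv_X_of_ne, map_ofNat]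
    try ring
  have h7 : pderiv (Sum.inl 1 : CRVb) (XiM1 7) = C (ccv 7) * zB ^ 4 + zbB * Bzv 7 := by
    rw [show XiM1 7 = 2 * (zB^4 * zbB - zB * zbB^4) from rfl,
      show ccv 7 = 2 from rfl, show Bzv 7 = (-8) * zB * zbB^2 from rfl]
    simp [zB, zbB, pderiv_mul, pderiv_pow, pderiv_X_self, pderiv_X_of_ne, map_ofNat]
    try ring
  fin_cases j
  · exact h0
  · exact h1
  · exact h2
  · exact h3
  · exact h4
  · exact h5
  · exact h6
  · exact h7

-- weighted degree machinery: every monomial b of P satisfies b(z) ≤ k + 4 b(ζ)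

def pdeg (k : ℤ) (P : CRB) : Prop :=
  ∀ b : CRVb →₀ ℕ, k + 4 * (b (Sum.inl 1) : ℤ) < (b (Sum.inl 0) : ℤ) →
    MvPolynomial.coeff b P = 0

lemma pdeg_mono {k k' : ℤ} {P : CRB} (h : pdeg k P) (hk : k ≤ k') : pdeg k' P :=
  fun b hb => h b (by omega)

lemma pdeg_C (c : ℂ) (k : ℤ) (hk : 0 ≤ k) : pdeg k (C c) := by
  intro b hb
  rw [MvPolynomial.coeff_C, if_neg]
  intro h
  rw [← h] at hb
  simp at hb
  omega

lemma pdeg_add {k : ℤ} {P Q : CRB} (hP : pdeg k P) (hQ : pdeg k Q) : pdeg k (P + Q) :=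
  fun b hb => by rw [MvPolynomial.coeff_add, hP b hb, hQ b hb, add_zero]

lemma pdeg_mul {k l : ℤ} {P Q : CRB} (hP : pdeg k P) (hQ : pdeg l Q) :
    pdeg (k + l) (P * Q) := by
  intro b hb
  rw [MvPolynomial.coeff_mul]
  apply Finset.sum_eq_zero
  rintro ⟨u, v⟩ huv
  rw [Finset.HasAntidiagonal.mem_antidiagonal] at huv
  have h0 : u (Sum.inl 0) + v (Sum.inl 0) = b (Sum.inl 0) := by
    have := congrArg (fun x => x (Sum.inl 0)) huv; simpa using this
  have h1 : u (Sum.inl 1) + v (Sum.inl 1) = b (Sum.inl 1) := by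
    have := congrArg (fun x => x (Sum.inl 1)) huv; simpa using this
  by_cases hu : k + 4 * (u (Sum.inl 1) : ℤ) < (u (Sum.inl 0) : ℤ)
  · rw [hP u hu, zero_mul]
  · have hv : l + 4 * (v (Sum.inl 1) : ℤ) < (v (Sum.inl 0) : ℤ) := by
      push_cast at hb hu ⊢
      omega
    rw [hQ v hv, mul_zero]

lemma pdeg_pow {k : ℤ} {P : CRB} (hP : pdeg k P) (n : ℕ) : pdeg (n * k) (P ^ n) := by
  induction n with
  | zero =>
    intro b hb
    rw [pow_zero, MvPolynomial.coeff_one, if_neg]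
    intro h
    rw [← h] at hb
    simp at hb
  | succ n ih =>
    rw [pow_succ]
    exact pdeg_mono (pdeg_mul ih hP) (le_of_eq (by push_cast; ring))

lemma pdeg_zB : pdeg 1 zB := by
  intro b hb
  rw [zB, MvPolynomial.coeff_X', if_neg]
  intro h
  rw [← h] at hb
  simp [Finsupp.single_apply] at hb

lemma pdeg_zbB (k : ℤ) (hk : -4 ≤ k) : pdeg k zbB := by
  intro b hb
  rw [zbB, MvPolynomial.coeff_X', if_neg]
  intro h
  rw [← h] at hb
  simp [Finsupp.single_apply] at hb
  omega

lemma pdeg_Xw (l : Fin 8) (k : ℤ) (hk : 0 ≤ k) : pdeg k (X (Sum.inr l)) := by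
  intro b hb
  rw [MvPolynomial.coeff_X', if_neg]
  intro h
  rw [← h] at hb
  simp [Finsupp.single_apply] at hb
  omega

lemma pdeg_two (k : ℤ) (hk : 0 ≤ k) : pdeg k (2 : CRB) := by
  rw [show (2 : CRB) = C 2 from (map_ofNat C 2).symm]
  exact pdeg_C 2 k hk

lemma pdeg_XiM1 (l : Fin 8) : pdeg 0 (XiM1 l) := by
  have hz := pdeg_zB
  have hzb := pdeg_zbB (-4) le_rfl
  have hc : ∀ c : ℂ, pdeg 0 (C c) := fun c => pdeg_C c 0 le_rfl
  have h2 := pdeg_two 0 le_rfl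
  have key : ∀ (a c : ℕ), (a : ℤ) ≤ 4 * c → pdeg 0 (zB ^ a * zbB ^ c) := by
    intro a c hac
    refine pdeg_mono (pdeg_mul (pdeg_pow hz a) (pdeg_pow hzb c)) ?_
    push_cast
    omega
  have pdeg_neg : ∀ {P : CRB}, pdeg 0 P → pdeg 0 (-P) := by
    intro P hP b hb
    rw [MvPolynomial.coeff_neg, hP b hb, neg_zero]
  have pdeg_sub : ∀ {P Q : CRB}, pdeg 0 P → pdeg 0 Q → pdeg 0 (P - Q) := by
    intro P Q hP hQ
    rw [sub_eq_add_neg]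
    exact pdeg_add hP (pdeg_neg hQ)
  have cmul : ∀ (c : ℂ) {P : CRB}, pdeg 0 P → pdeg 0 (C c * P) := by
    intro c P hP
    exact pdeg_mono (pdeg_mul (hc c) hP) (by norm_num)
  have tmul : ∀ {P : CRB}, pdeg 0 P → pdeg 0 (2 * P) := by
    intro P hP
    exact pdeg_mono (pdeg_mul h2 hP) (by norm_num)
  have h0 : pdeg 0 (XiM1 0) := by
    rw [show XiM1 0 = C (2*I) * (zB^1 * zbB^1) from by
      rw [show XiM1 0 = C (2*I) * zB * zbB from rfl]; ring]
    exact cmul _ (key 1 1 (by norm_num))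
  have h1 : pdeg 0 (XiM1 1) := by
    rw [show XiM1 1 = C (2*I) * (zB^2 * zbB^1 + zB^1 * zbB^2) from by
      rw [show XiM1 1 = C (2*I) * (zB^2 * zbB + zB * zbB^2) from rfl]; ring]
    exact cmul _ (pdeg_add (key 2 1 (by norm_num)) (key 1 2 (by norm_num)))
  have h2' : pdeg 0 (XiM1 2) := by
    rw [show XiM1 2 = 2 * (zB^2 * zbB^1 - zB^1 * zbB^2) from by
      rw [show XiM1 2 = 2 * (zB^2 * zbB - zB * zbB^2) from rfl]; ring]
    exact tmul (pdeg_sub (key 2 1 (by norm_num)) (key 1 2 (by norm_num)))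
  have h3 : pdeg 0 (XiM1 3) := by
    rw [show XiM1 3 = C (2*I) * (zB^3 * zbB^1 + zB^1 * zbB^3) from by
      rw [show XiM1 3 = C (2*I) * (zB^3 * zbB + zB * zbB^3) from rfl]; ring]
    exact cmul _ (pdeg_add (key 3 1 (by norm_num)) (key 1 3 (by norm_num)))
  have h4 : pdeg 0 (XiM1 4) := by
    rw [show XiM1 4 = 2 * (zB^3 * zbB^1 - zB^1 * zbB^3) from by
      rw [show XiM1 4 = 2 * (zB^3 * zbB - zB * zbB^3) from rfl]; ring]
    exact tmul (pdeg_sub (key 3 1 (by norm_num)) (key 1 3 (by norm_num)))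
  have h5 : pdeg 0 (XiM1 5) := by
    rw [show XiM1 5 = C (2*I) * (zB^2 * zbB^2) from by
      rw [show XiM1 5 = C (2*I) * zB^2 * zbB^2 from rfl]; ring]
    exact cmul _ (key 2 2 (by norm_num))
  have h6 : pdeg 0 (XiM1 6) := by
    rw [show XiM1 6 = C (2*I) * (zB^4 * zbB^1 + zB^1 * zbB^4) from by
      rw [show XiM1 6 = C (2*I) * (zB^4 * zbB + zB * zbB^4) from rfl]; ring]
    exact cmul _ (pdeg_add (key 4 1 (by norm_num)) (key 1 4 (by norm_num)))
  have h7 : pdeg 0 (XiM1 7) := by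
    rw [show XiM1 7 = 2 * (zB^4 * zbB^1 - zB^1 * zbB^4) from by
      rw [show XiM1 7 = 2 * (zB^4 * zbB - zB * zbB^4) from rfl]; ring]
    exact tmul (pdeg_sub (key 4 1 (by norm_num)) (key 1 4 (by norm_num)))
  fin_cases l
  · exact h0
  · exact h1
  · exact h2'
  · exact h3
  · exact h4
  · exact h5
  · exact h6
  · exact h7

lemma pdeg_one : pdeg 0 (1 : CRB) := by simpa using pdeg_pow pdeg_zB 0

lemma pdeg0_mul {P Q : CRB} (hP : pdeg 0 P) (hQ : pdeg 0 Q) : pdeg 0 (P * Q) := by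
  simpa using pdeg_mul hP hQ

lemma pdeg_prodA (d' : CRVs →₀ ℕ) :
    pdeg (d' (Sum.inl ())) (∏ v : CRVs, substA v ^ d' v) := by
  rw [Fintype.prod_sum_type]
  have hA : pdeg (d' (Sum.inl ())) (∏ u : Unit, substA (Sum.inl u) ^ d' (Sum.inl u)) := by
    rw [show (∏ u : Unit, substA (Sum.inl u) ^ d' (Sum.inl u))
        = zB ^ d' (Sum.inl ()) from by simp [substA]]
    exact pdeg_mono (pdeg_pow pdeg_zB _) (le_of_eq (by push_cast; ring))
  have hB : pdeg 0 (∏ l : Fin 8, substA (Sum.inr l) ^ d' (Sum.inr l)) := by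
    refine Finset.prod_induction _ (pdeg 0) (fun _ _ => pdeg0_mul) pdeg_one ?_
    intro l _
    have : pdeg 0 (substA (Sum.inr l)) := by
      rw [show substA (Sum.inr l) = X (Sum.inr l) + XiM1 l from rfl]
      exact pdeg_add (pdeg_Xw l 0 le_rfl) (pdeg_XiM1 l)
    exact pdeg_mono (pdeg_pow this _) (le_of_eq (by push_cast; ring))
  exact pdeg_mono (pdeg_mul hA hB) (le_of_eq (by push_cast; ring))

lemma coeff_substA_small (f : MvPowerSeries CRVs ℂ) (T : ℕ)
    (hf : ∀ d' : CRVs →₀ ℕ, T ≤ d' (Sum.inl ()) → MvPowerSeries.coeff d' f = 0)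
    (e : CRVb →₀ ℕ) (he : (T : ℤ) - 1 + 4 * (e (Sum.inl 1) : ℤ) < (e (Sum.inl 0) : ℤ)) :
    MvPowerSeries.coeff e (substPS substA f) = 0 := by
  rw [MvPowerSeries.coeff_apply, substPS]
  apply Finset.sum_eq_zero
  intro d' _
  by_cases hd : T ≤ d' (Sum.inl ())
  · rw [hf d' hd, zero_mul]
  · rw [pdeg_prodA d' e (by push_cast at he ⊢; omega), mul_zero]

/-- (Polynomial degree bounds in `z`.)  If `X = Z∂_z + Σ W^l ∂_{w^l}`, with formal power
series coefficients, is a formal infinitesimal CR-automorphism of `M¹`, then the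
coefficient of `z^t` vanishes: in `Z` for `t ≥ 6`, in `W^1` for `t ≥ 2`, in `W^2, W^3`
for `t ≥ 3`, in `W^4, W^5` for `t ≥ 4`, in `W^6` for `t ≥ 1`, and in `W^7, W^8` for
`t ≥ 5`.  In particular `Z` and all `W^l` are polynomial in `z`. -/
theorem formal_CR_automorphism_polynomial_in_z
    (Z : MvPowerSeries CRVs ℂ) (W : Fin 8 → MvPowerSeries CRVs ℂ)
    (h : IsFormalCRAut Z W) :
    (∀ d : CRVs →₀ ℕ, 6 ≤ d (Sum.inl ()) → MvPowerSeries.coeff d Z = 0) ∧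
    (∀ (l : Fin 8) (d : CRVs →₀ ℕ), thr l ≤ d (Sum.inl ()) →
      MvPowerSeries.coeff d (W l) = 0) := by
  have thr_pos : ∀ j : Fin 8, 1 ≤ thr j := by decide
  have hW : ∀ (j : Fin 8) (d : CRVs →₀ ℕ), thr j ≤ d (Sum.inl ()) →
      MvPowerSeries.coeff d (W j) = 0 := by
    intro j d hd
    have e0 := congrArg (MvPowerSeries.coeff (emb d)) (h j)
    rw [map_sub, map_sub, map_sub, MvPowerSeries.coeff_zero] at e0
    rw [coeff_substA_emb] at e0
    rw [coeff_substB_zero (psconj (W j)) (emb d)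
      (by rw [emb_z]; have := thr_pos j; omega)] at e0
    rw [pdz j, L_zb _ _ _ (emb_zeta d)] at e0
    rw [pdzb j] at e0
    rw [show ((C (ccv j) * zB ^ (thr j - 1) + zbB * Bzv j : CRB) : MvPowerSeries CRVb ℂ)
        = ((C (ccv j) * zB ^ (thr j - 1) : CRB) : MvPowerSeries CRVb ℂ)
          + ((zbB * Bzv j : CRB) : MvPowerSeries CRVb ℂ) from by push_cast; ring,
      mul_add, map_add] at e0
    rw [L_zk _ (fun a ha => coeff_substB_zero (psconj Z) a ha) _ _ _
      (by rw [emb_z]; have := thr_pos j; omega)] at e0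
    rw [L_zb _ _ _ (emb_zeta d)] at e0
    simpa using e0
  refine ⟨?_, hW⟩
  intro d hd
  have e0 := congrArg (MvPowerSeries.coeff
      (emb d + Finsupp.single (Sum.inl 1 : CRVb) 1)) (h 0)
  rw [map_sub, map_sub, map_sub, MvPowerSeries.coeff_zero] at e0
  have hez : ((emb d + Finsupp.single (Sum.inl 1 : CRVb) 1 : CRVb →₀ ℕ) (Sum.inl 0) : ℕ)
      = d (Sum.inl ()) := by
    rw [Finsupp.add_apply, emb_z, Finsupp.single_apply, if_neg (by decide)]
    omega
  have hezb : ((emb d + Finsupp.single (Sum.inl 1 : CRVb) 1 : CRVb →₀ ℕ) (Sum.inl 1) : ℕ)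
      = 1 := by
    rw [Finsupp.add_apply, emb_zeta, Finsupp.single_apply, if_pos rfl]
  rw [coeff_substA_small (W 0) (thr 0) (hW 0) _
      (by rw [hez, hezb, show thr 0 = 2 from rfl]; push_cast; omega)] at e0
  rw [coeff_substB_zero (psconj (W 0)) _ (by rw [hez]; omega)] at e0
  rw [pdz 0, show (zbB * Azv 0 : CRB) = C (2*I) * zbB from by
      rw [show Azv 0 = C (2*I) from rfl]; ring,
    L_shift _ _ _, coeff_substA_emb] at e0
  rw [pdzb 0, show ((C (ccv 0) * zB ^ (thr 0 - 1) + zbB * Bzv 0 : CRB)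
        : MvPowerSeries CRVb ℂ)
      = ((C (2*I) * zB ^ 1 : CRB) : MvPowerSeries CRVb ℂ) from by
        rw [show ccv 0 = 2*I from rfl, show Bzv 0 = 0 from rfl,
          show thr 0 - 1 = 1 from rfl]; push_cast; ring] at e0
  rw [L_zk _ (fun a ha => coeff_substB_zero (psconj Z) a ha) _ _ _
      (by rw [hez]; omega)] at e0
  have : (2*I) * MvPowerSeries.coeff d Z = 0 := by linear_combination -e0
  have h2I : (2*I : ℂ) ≠ 0 := by simp [Complex.I_ne_zero]
  exact (mul_eq_zero.mp this).resolve_left h2I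


end
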